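/- Let p and q be positive integers and b > 0 a real number. Let Δ_p be the vertex set of a p-dimensional regular simplex with side length b and Δ_q the vertex set of a q-dimensional regular simplex with side length b. Then for every positive integer r, every coloring of Euclidean space E^{pq+2} with r colors contains a rainbow congruent copy of Δ_p or a monochromatic congruent copy of Δ_q. -/

import Mathlib

/-- `f` maps the configuration `K ⊆ E^m` to a congruent copy of itself in `E^d`: it preserves
all pairwise distances between points of `K` (hence is injective on `K`). -/
def IsCongruentCopy {m d : ℕ} (K : Set (EuclideanSpace ℝ (Fin m)))
    (f : EuclideanSpace ℝ (Fin m) → EuclideanSpace ℝ (Fin d)) : Prop :=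
  ∀ x ∈ K, ∀ y ∈ K, dist (f x) (f y) = dist x y

/-- The coloring `χ` of `E^d` contains a monochromatic congruent copy of `K ⊆ E^m`. -/
def HasMonoCopy {r m d : ℕ} (χ : EuclideanSpace ℝ (Fin d) → Fin r)
    (K : Set (EuclideanSpace ℝ (Fin m))) : Prop :=
  ∃ f, IsCongruentCopy K f ∧ ∃ col : Fin r, ∀ x ∈ K, χ (f x) = col

/-- The coloring `χ` of `E^d` contains a rainbow congruent copy of `K ⊆ E^m`. -/
def HasRainbowCopy {r m d : ℕ} (χ : EuclideanSpace ℝ (Fin d) → Fin r)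
    (K : Set (EuclideanSpace ℝ (Fin m))) : Prop :=
  ∃ f, IsCongruentCopy K f ∧ ∀ x ∈ K, ∀ y ∈ K, x ≠ y → χ (f x) ≠ χ (f y)

/-- The vertex set of a regular `(s-1)`-dimensional simplex with side length `a`, realized in
`E^s` as the set of points with exactly one nonzero coordinate, equal to `a/√2`. -/
def simplexVertices (s : ℕ) (a : ℝ) : Set (EuclideanSpace ℝ (Fin s)) :=
  Set.range fun i : Fin s => EuclideanSpace.single i (a / Real.sqrt 2)

/-- The Cartesian product `K₁ ∗ K₂ ⊆ E^{m₁+m₂}` of configurations `K₁ ⊆ E^{m₁}` and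
`K₂ ⊆ E^{m₂}`. -/
def cartesianProd {m₁ m₂ : ℕ} (K₁ : Set (EuclideanSpace ℝ (Fin m₁)))
    (K₂ : Set (EuclideanSpace ℝ (Fin m₂))) : Set (EuclideanSpace ℝ (Fin (m₁ + m₂))) :=
  {z | ∃ x ∈ K₁, ∃ y ∈ K₂,
    (∀ i : Fin m₁, z (Fin.castAdd m₂ i) = x i) ∧ (∀ j : Fin m₂, z (Fin.natAdd m₁ j) = y j)}

/- ### Auxiliary geometry -/

lemma sum_dist_sq {n : ℕ} (x y : EuclideanSpace ℝ (Fin n)) :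
    dist x y = Real.sqrt (∑ i, (x i - y i) ^ 2) := by
  rw [EuclideanSpace.dist_eq]
  congr 1
  exact Finset.sum_congr rfl fun i _ => by rw [Real.dist_eq, sq_abs]

lemma single_eval {n : ℕ} (i j : Fin n) (a : ℝ) :
    (EuclideanSpace.single i a : EuclideanSpace ℝ (Fin n)) j = if j = i then a else 0 :=
  EuclideanSpace.single_apply i a j

lemma single_inj {n : ℕ} {i j : Fin n} {a : ℝ} (ha : a ≠ 0)
    (h : (EuclideanSpace.single i a : EuclideanSpace ℝ (Fin n)) = EuclideanSpace.single j a) :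
    i = j := by
  by_contra hij
  have : (EuclideanSpace.single i a : EuclideanSpace ℝ (Fin n)) i = EuclideanSpace.single j a i := by rw [h]
  rw [single_eval, single_eval, if_pos rfl, if_neg hij] at this
  exact ha this

lemma dist_single_pair {m : ℕ} {i j : Fin m} (hij : i ≠ j) {b : ℝ} (hb : 0 < b) :
    dist (EuclideanSpace.single i (b / Real.sqrt 2) : EuclideanSpace ℝ (Fin m))
      (EuclideanSpace.single j (b / Real.sqrt 2)) = b := by
  set a := b / Real.sqrt 2 with ha
  rw [sum_dist_sq]
  have hsum : ∑ x : Fin m, ((EuclideanSpace.single i a : EuclideanSpace ℝ (Fin m)) x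
      - (EuclideanSpace.single j a : EuclideanSpace ℝ (Fin m)) x) ^ 2
      = ∑ x : Fin m, ((if x = i then a ^ 2 else 0) + (if x = j then a ^ 2 else 0)) := by
    refine Finset.sum_congr rfl fun x _ => ?_
    rw [single_eval, single_eval]
    rcases eq_or_ne x i with rfl | hxi
    · rw [if_pos rfl, if_pos rfl, if_neg hij, if_neg hij]; ring
    · rcases eq_or_ne x j with rfl | hxj
      · rw [if_neg hxi, if_neg hxi, if_pos rfl, if_pos rfl]; ring
      · rw [if_neg hxi, if_neg hxi, if_neg hxj, if_neg hxj]; ring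
  rw [hsum, Finset.sum_add_distrib, Finset.sum_ite_eq' Finset.univ i (fun _ => a ^ 2),
    Finset.sum_ite_eq' Finset.univ j (fun _ => a ^ 2), if_pos (Finset.mem_univ i),
    if_pos (Finset.mem_univ j)]
  have h2 : a ^ 2 + a ^ 2 = b ^ 2 := by
    rw [ha]; rw [div_pow, Real.sq_sqrt (by norm_num : (2:ℝ) ≥ 0)]; ring
  rw [h2, Real.sqrt_sq hb.le]

/-- A regular simplex with `n+1` vertices and side `b` inside `E^n`. -/
noncomputable def bigSimplex (n : ℕ) (b : ℝ) : Fin (n+1) → EuclideanSpace ℝ (Fin n) :=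
  fun k => if h : (k : ℕ) < n then EuclideanSpace.single ⟨(k : ℕ), h⟩ (b / Real.sqrt 2)
    else WithLp.toLp 2 (fun _ => (b / Real.sqrt 2) * (1 + Real.sqrt (n+1)) / n)

lemma key_algebra (n : ℕ) (hn : 0 < n) {a b : ℝ} (hab : a ^ 2 + a ^ 2 = b ^ 2) :
    (n : ℝ) * (a * (1 + Real.sqrt (n+1)) / n) ^ 2 + a ^ 2
      - 2 * a * (a * (1 + Real.sqrt (n+1)) / n) = b ^ 2 := by
  have hn' : (n : ℝ) ≠ 0 := Nat.cast_ne_zero.mpr hn.ne'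
  have hs : Real.sqrt (n+1) ^ 2 = (n : ℝ) + 1 := Real.sq_sqrt (by positivity)
  field_simp
  linear_combination a ^ 2 * hs + (n:ℝ) * hab

lemma dist_bigSimplex {n : ℕ} (hn : 0 < n) {b : ℝ} (hb : 0 < b) {k l : Fin (n+1)}
    (hkl : k ≠ l) : dist (bigSimplex n b k) (bigSimplex n b l) = b := by
  set a := b / Real.sqrt 2 with ha
  set t := a * (1 + Real.sqrt (n+1)) / n with hat
  have h2 : a ^ 2 + a ^ 2 = b ^ 2 := by
    rw [ha]; rw [div_pow, Real.sq_sqrt (by norm_num : (2:ℝ) ≥ 0)]; ring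
  have hkey : (n : ℝ) * t ^ 2 + a ^ 2 - 2 * a * t = b ^ 2 := key_algebra n hn h2
  have hsc : ∀ i : Fin n,
      dist (EuclideanSpace.single i a : EuclideanSpace ℝ (Fin n))
        (WithLp.toLp 2 (fun _ => t) : EuclideanSpace ℝ (Fin n)) = b := by
    intro i
    rw [sum_dist_sq]
    have hsum : ∑ x : Fin n, ((EuclideanSpace.single i a : EuclideanSpace ℝ (Fin n)) x
        - (WithLp.toLp 2 (fun _ => t) : EuclideanSpace ℝ (Fin n)) x) ^ 2
        = ∑ x : Fin n, (t ^ 2 + if x = i then a ^ 2 - 2 * a * t else 0) := by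
      refine Finset.sum_congr rfl fun x _ => ?_
      rw [single_eval]
      rcases eq_or_ne x i with rfl | hxi
      · rw [if_pos rfl, if_pos rfl]; show (a - t) ^ 2 = _; ring
      · rw [if_neg hxi, if_neg hxi]; show ((0:ℝ) - t) ^ 2 = _; ring
    rw [hsum, Finset.sum_add_distrib, Finset.sum_const,
      Finset.sum_ite_eq' Finset.univ i (fun _ => a ^ 2 - 2 * a * t),
      if_pos (Finset.mem_univ i), Finset.card_univ, Fintype.card_fin,
      nsmul_eq_mul]
    have : (n : ℝ) * t ^ 2 + (a ^ 2 - 2 * a * t) = b ^ 2 := by linarith [hkey]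
    rw [this, Real.sqrt_sq hb.le]
  unfold bigSimplex
  by_cases hk : (k : ℕ) < n <;> by_cases hl : (l : ℕ) < n
  · rw [dif_pos hk, dif_pos hl]
    refine dist_single_pair (fun h => hkl (Fin.ext ?_)) hb
    simpa using h
  · rw [dif_pos hk, dif_neg hl]; exact hsc _
  · rw [dif_neg hk, dif_pos hl, dist_comm]; exact hsc _
  · exact absurd (Fin.ext (by omega : (k : ℕ) = (l : ℕ))) hkl

lemma copy_of_sel {n s : ℕ} {b : ℝ} (hb : 0 < b)
    (pts : Fin (n+1) → EuclideanSpace ℝ (Fin n))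
    (hpts : ∀ k l, k ≠ l → dist (pts k) (pts l) = b)
    (sel : Fin s → Fin (n+1)) (hsel : Function.Injective sel) :
    ∃ f : EuclideanSpace ℝ (Fin s) → EuclideanSpace ℝ (Fin n),
      IsCongruentCopy (simplexVertices s b) f ∧
      ∀ i : Fin s, f (EuclideanSpace.single i (b / Real.sqrt 2)) = pts (sel i) := by
  classical
  have ha : (b / Real.sqrt 2) ≠ 0 := by positivity
  set a := b / Real.sqrt 2 with hadef
  set f : EuclideanSpace ℝ (Fin s) → EuclideanSpace ℝ (Fin n) := fun x =>
    if h : ∃ i : Fin s, x = EuclideanSpace.single i a then pts (sel h.choose) else 0 with hfdef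
  have hf : ∀ i : Fin s, f (EuclideanSpace.single i a) = pts (sel i) := by
    intro i
    have h : ∃ j : Fin s, (EuclideanSpace.single i a : EuclideanSpace ℝ (Fin s))
        = EuclideanSpace.single j a := ⟨i, rfl⟩
    rw [hfdef]
    simp only
    rw [dif_pos h]
    have : h.choose = i := (single_inj ha h.choose_spec).symm
    rw [this]
  refine ⟨f, ?_, hf⟩
  rintro x ⟨i, rfl⟩ y ⟨j, rfl⟩
  simp only
  rcases eq_or_ne i j with rfl | hij
  · simp
  · rw [hf i, hf j, hpts _ _ (fun hc => hij (hsel hc)), dist_single_pair hij hb]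

/-- For positive integers `p, q` and `b > 0`, let `Δ_p` (resp. `Δ_q`) be the vertex set of a
`p`-dimensional (resp. `q`-dimensional) regular simplex with side length `b`. Then for every
positive integer `r`, every `r`-coloring of `E^{pq+2}` contains a rainbow congruent copy of
`Δ_p` or a monochromatic congruent copy of `Δ_q`. -/
theorem euclidean_gallai_ramsey_simplices (p q : ℕ) (hp : 0 < p) (hq : 0 < q)
    (b : ℝ) (hb : 0 < b) (r : ℕ) (hr : 0 < r)
    (χ : EuclideanSpace ℝ (Fin (p * q + 2)) → Fin r) :
    HasRainbowCopy χ (simplexVertices (p + 1) b) ∨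
    HasMonoCopy χ (simplexVertices (q + 1) b) := by
  classical
  have hn0 : 0 < p * q + 2 := by omega
  set pts := bigSimplex (p * q + 2) b with hptsdef
  have hpts : ∀ k l : Fin (p * q + 2 + 1), k ≠ l → dist (pts k) (pts l) = b :=
    fun k l h => dist_bigSimplex hn0 hb h
  set c : Fin (p * q + 2 + 1) → Fin r := fun k => χ (pts k) with hc
  set S := Finset.image c Finset.univ with hS
  by_cases hScard : p + 1 ≤ S.card
  · left
    obtain ⟨T, hTS, hT⟩ := Finset.exists_subset_card_eq hScard
    set e := T.orderIsoOfFin hT with he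
    have hsel0 : ∀ i : Fin (p+1), ∃ k : Fin (p * q + 2 + 1), c k = (e i : Fin r) := by
      intro i
      have hmem : ((e i : Fin r)) ∈ S := hTS (e i).2
      obtain ⟨k, _, hk⟩ := Finset.mem_image.mp hmem
      exact ⟨k, hk⟩
    choose sel hselc using hsel0
    have hinj : Function.Injective sel := by
      intro i j hij
      have : (e i : Fin r) = (e j : Fin r) := by rw [← hselc, ← hselc, hij]
      exact e.injective (Subtype.ext this)
    obtain ⟨f, hcong, hf⟩ := copy_of_sel hb pts hpts sel hinj
    refine ⟨f, hcong, ?_⟩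
    rintro x ⟨i, rfl⟩ y ⟨j, rfl⟩ hxy
    have hij : i ≠ j := fun h => hxy (by rw [h])
    simp only at hxy ⊢
    rw [hf i, hf j]
    intro hcc
    refine hij (e.injective (Subtype.ext ?_))
    rw [← hselc i, ← hselc j]
    simp only [hc]
    exact hcc
  · right
    push_neg at hScard
    have hmaps : ∀ k ∈ (Finset.univ : Finset (Fin (p * q + 2 + 1))), c k ∈ S :=
      fun k _ => Finset.mem_image_of_mem c (Finset.mem_univ k)
    have hcard : S.card * q < (Finset.univ : Finset (Fin (p * q + 2 + 1))).card := by
      rw [Finset.card_univ, Fintype.card_fin]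
      have h1 : S.card * q ≤ p * q := Nat.mul_le_mul_right q (by omega)
      omega
    obtain ⟨col, _, hfib⟩ :=
      Finset.exists_lt_card_fiber_of_mul_lt_card_of_maps_to hmaps hcard
    obtain ⟨U, hUsub, hU⟩ := Finset.exists_subset_card_eq (Nat.succ_le_of_lt hfib)
    set e := U.orderIsoOfFin hU with he
    have hinj : Function.Injective (fun i : Fin (q+1) => (e i : Fin (p * q + 2 + 1))) :=
      fun i j hij => e.injective (Subtype.ext hij)
    have hcol : ∀ i : Fin (q+1), c ((e i : Fin (p * q + 2 + 1))) = col := by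
      intro i
      have := hUsub (e i).2
      exact (Finset.mem_filter.mp this).2
    obtain ⟨f, hcong, hf⟩ := copy_of_sel hb pts hpts _ hinj
    refine ⟨f, hcong, col, ?_⟩
    rintro x ⟨i, rfl⟩
    simp only
    rw [hf i]
    have := hcol i
    simp only [hc] at this
    exact this
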